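/- Let (X, 𝒜, μ) be a measure space with μ(X) = 1 (a probability space), let n ≥ 2 be a real number, and let f : X → ℝ be measurable with x ↦ exp(n·f(x)), x ↦ exp(2·f(x)) and x ↦ exp(f(x)) all μ-integrable. If ∫_X exp(n·f) dμ ≤ 1 and ∫_X exp(2f) dμ + ∫_X exp(f) dμ ≥ 2, then f = 0 μ-almost everywhere. -/

import Mathlib

open MeasureTheory Real Set

lemma psi_deriv (n : ℝ) (hn : 2 ≤ n) (t : ℝ) :
    HasDerivAt (fun t => 3/n * Real.exp (n*t) - Real.exp (2*t) - Real.exp t + (2 - 3/n))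
      (3 * Real.exp (n*t) - 2 * Real.exp (2*t) - Real.exp t) t := by
  have hn0 : n ≠ 0 := by linarith
  have h1 : HasDerivAt (fun t : ℝ => Real.exp (n*t)) (Real.exp (n*t) * (n*1)) t :=
    ((hasDerivAt_id t).const_mul n).exp
  have h2 : HasDerivAt (fun t : ℝ => Real.exp (2*t)) (Real.exp (2*t) * (2*1)) t :=
    ((hasDerivAt_id t).const_mul 2).exp
  have h3 : HasDerivAt (fun t : ℝ => Real.exp t) (Real.exp t) t := Real.hasDerivAt_exp t
  have := (((h1.const_mul (3/n)).sub h2).sub h3).add_const (2 - 3/n)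
  convert this using 1
  · rfl
  · rfl
  · rfl
  rw [show 3 / n * (Real.exp (n*t) * (n*1)) = 3 * Real.exp (n*t) by
    rw [mul_one, mul_comm (Real.exp (n*t)) n, ← mul_assoc, div_mul_cancel₀ 3 hn0]]
  ring

lemma psi_key (n : ℝ) (hn : 2 ≤ n) (t : ℝ) :
    0 ≤ 3/n * Real.exp (n*t) - Real.exp (2*t) - Real.exp t + (2 - 3/n) ∧
    (3/n * Real.exp (n*t) - Real.exp (2*t) - Real.exp t + (2 - 3/n) = 0 → t = 0) := by
  set g : ℝ → ℝ := fun t => 3/n * Real.exp (n*t) - Real.exp (2*t) - Real.exp t + (2 - 3/n)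
    with hg
  have hn0 : n ≠ 0 := by linarith
  have hg0 : g 0 = 0 := by simp [hg]; ring
  have hcont : Continuous g := by
    fun_prop
  have hmono : StrictMonoOn g (Ici (0:ℝ)) := by
    apply strictMonoOn_of_deriv_pos (convex_Ici 0) hcont.continuousOn
    intro s hs
    rw [interior_Ici] at hs
    have hs' : (0:ℝ) < s := hs
    rw [(psi_deriv n hn s).deriv]
    have h1 : Real.exp (2*s) ≤ Real.exp (n*s) := by
      apply Real.exp_le_exp.2; nlinarith
    have h2 : Real.exp s < Real.exp (2*s) := by
      apply Real.exp_lt_exp.2; linarith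
    linarith
  have hanti : StrictAntiOn g (Iic (0:ℝ)) := by
    apply strictAntiOn_of_deriv_neg (convex_Iic 0) hcont.continuousOn
    intro s hs
    rw [interior_Iic] at hs
    have hs' : s < (0:ℝ) := hs
    rw [(psi_deriv n hn s).deriv]
    have h1 : Real.exp (n*s) ≤ Real.exp (2*s) := by
      apply Real.exp_le_exp.2; nlinarith
    have h2 : Real.exp (2*s) < Real.exp s := by
      apply Real.exp_lt_exp.2; linarith
    linarith
  have key : ∀ s : ℝ, s ≠ 0 → 0 < g s := by
    intro s hs
    rcases lt_or_gt_of_ne hs with h | h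
    · have := hanti (le_of_lt h) (le_refl (0:ℝ)) h
      rw [hg0] at this; linarith
    · have := hmono (le_refl (0:ℝ)) (le_of_lt h) h
      rw [hg0] at this; linarith
  constructor
  · by_cases h : t = 0
    · subst h; exact le_of_eq hg0.symm
    · exact le_of_lt (key t h)
  · intro h
    by_contra hne
    exact absurd h (ne_of_gt (key t hne))

/-- Equality case: on a probability space, if `∫ exp(n f) dμ ≤ 1` for `n ≥ 2` and
`∫ exp(2f) dμ + ∫ exp(f) dμ ≥ 2`, then `f = 0` μ-a.e. -/
theorem conformal_factor_vanishes
    {X : Type*} [MeasurableSpace X] (μ : Measure X) [IsProbabilityMeasure μ]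
    (n : ℝ) (hn : 2 ≤ n) (f : X → ℝ) (hf : Measurable f)
    (hint_n : Integrable (fun x => Real.exp (n * f x)) μ)
    (hint_2 : Integrable (fun x => Real.exp (2 * f x)) μ)
    (hint_1 : Integrable (fun x => Real.exp (f x)) μ)
    (hle : ∫ x, Real.exp (n * f x) ∂μ ≤ 1)
    (hge : 2 ≤ (∫ x, Real.exp (2 * f x) ∂μ) + ∫ x, Real.exp (f x) ∂μ) :
    f =ᵐ[μ] 0 := by
  have hn0 : (0:ℝ) < n := by linarith
  set h : X → ℝ := fun x =>
    3/n * Real.exp (n * f x) - Real.exp (2 * f x) - Real.exp (f x) + (2 - 3/n) with hh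
  have hint_h : Integrable h μ :=
    (((hint_n.const_mul (3/n)).sub hint_2).sub hint_1).add (integrable_const _)
  have hnonneg : ∀ x, 0 ≤ h x := fun x => (psi_key n hn (f x)).1
  have hint_val : ∫ x, h x ∂μ =
      3/n * (∫ x, Real.exp (n * f x) ∂μ) - (∫ x, Real.exp (2 * f x) ∂μ)
        - (∫ x, Real.exp (f x) ∂μ) + (2 - 3/n) := by
    have i1 : Integrable (fun x => 3/n * Real.exp (n * f x)) μ := hint_n.const_mul _
    have i2 : Integrable (fun x => 3/n * Real.exp (n * f x) - Real.exp (2 * f x)) μ :=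
      i1.sub hint_2
    have i3 : Integrable
        (fun x => 3/n * Real.exp (n * f x) - Real.exp (2 * f x) - Real.exp (f x)) μ :=
      i2.sub hint_1
    rw [hh, integral_add i3 (integrable_const _), integral_sub i2 hint_1,
      integral_sub i1 hint_2, MeasureTheory.integral_const_mul, integral_const]
    simp
  have hle' : ∫ x, h x ∂μ ≤ 0 := by
    rw [hint_val]
    have : 3/n * (∫ x, Real.exp (n * f x) ∂μ) ≤ 3/n * 1 :=
      mul_le_mul_of_nonneg_left hle (by positivity)
    linarith
  have hge' : 0 ≤ ∫ x, h x ∂μ := integral_nonneg hnonneg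
  have hzero : ∫ x, h x ∂μ = 0 := le_antisymm hle' hge'
  have hae : h =ᵐ[μ] 0 := by
    rw [← integral_eq_zero_iff_of_nonneg (fun x => hnonneg x) hint_h]
    exact hzero
  filter_upwards [hae] with x hx
  exact (psi_key n hn (f x)).2 hx
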